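/- Let U₀ be a CIR over schema {?A₁, ?A₂} (both attributes uncertain), and for k > 2 construct U over {?A₁,…,?A_k} by extending each tuple of U₀ with k−2 new cells, each holding the same uniform distribution over m distinct fresh values, where m = |tids(U₀)|. Let F_k be the FD set stating that all k attributes are pairwise equivalent (A_i ↔ A_j for all i, j). Then U has a positive-probability sample satisfying F_k if and only if U₀ has a positive-probability sample satisfying {A₁ → A₂, A₂ → A₁}; moreover, for every sample r of U, Pr_U(r) = Pr_{U₀}(π_{{?A₁,?A₂}} r) · m^{−m(k−2)}. -/
import Mathlib


private lemma stmt9_aux (A B C : ℝ) (m n : ℕ) :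
    A * (B * (C ^ m) ^ (n + 1)) = A * B * C ^ (m * (n + 3 - 2)) := by
  have h : n + 3 - 2 = n + 1 := by omega
  rw [h, ← pow_mul]
  ring

/-- Let `U₀` be a CIR over `{?A₁, ?A₂}` (cell distributions `p1 t`, `p2 t`,
supported on the original values, i.e. vanishing on the fresh values `Sum.inr i`).  For `k > 2`,
extend each tuple with `k − 2` new cells, each holding the uniform distribution over the
`m = |tids(U₀)|` fresh values.  Let `F_k` state that all `k` attributes are pairwise equivalent.
Then `U` has a positive-probability sample satisfying `F_k` iff `U₀` has a positive-probability
sample satisfying `{A₁ → A₂, A₂ → A₁}`; moreover for every sample `r` of `U` whose fresh columns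
take fresh values, `Pr_U(r) = Pr_{U₀}(π_{{?A₁,?A₂}} r) · m^{−m(k−2)}`. -/
theorem stmt9 {ι V : Type} [Fintype ι] (k : ℕ) (hk : 2 < k)
    (p1 p2 : ι → (V ⊕ ι) → ℝ)
    (hnn1 : ∀ t w, 0 ≤ p1 t w) (hnn2 : ∀ t w, 0 ≤ p2 t w)
    (h1 : ∀ t i, p1 t (Sum.inr i) = 0) (h2 : ∀ t i, p2 t (Sum.inr i) = 0) :
    let m : ℕ := Fintype.card ι
    let u : (V ⊕ ι) → ℝ := fun w => match w with
      | Sum.inl _ => 0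
      | Sum.inr _ => 1 / (m : ℝ)
    let cell : Fin k → ι → (V ⊕ ι) → ℝ := fun j =>
      if j.val = 0 then p1 else if j.val = 1 then p2 else fun _ => u
    let Pr : (Fin k → ι → (V ⊕ ι)) → ℝ := fun r => ∏ j : Fin k, ∏ t : ι, cell j t (r j t)
    -- possible consistency transfers in both directions
    ((∃ r : Fin k → ι → (V ⊕ ι), 0 < Pr r ∧
        ∀ j j' : Fin k, ∀ s t : ι, r j s = r j t → r j' s = r j' t)
      ↔ (∃ a b : ι → (V ⊕ ι),
          0 < (∏ t : ι, p1 t (a t) * p2 t (b t)) ∧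
          ∀ s t : ι, (a s = a t ↔ b s = b t)))
    -- the probability-scaling formula
    ∧ ∀ r : Fin k → ι → (V ⊕ ι),
        (∀ j : Fin k, 2 ≤ j.val → ∀ t : ι, ∃ i : ι, r j t = Sum.inr i) →
        Pr r = (∏ t : ι, p1 t (r ⟨0, by omega⟩ t) * p2 t (r ⟨1, by omega⟩ t))
          * ((m : ℝ))⁻¹ ^ (m * (k - 2)) := by
  intro m u cell Pr
  have j0 : Fin k := ⟨0, by omega⟩
  constructor
  · constructor
    · rintro ⟨r, hpos, hcons⟩
      refine ⟨r ⟨0, by omega⟩, r ⟨1, by omega⟩, ?_, fun s t =>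
        ⟨hcons ⟨0, by omega⟩ ⟨1, by omega⟩ s t, hcons ⟨1, by omega⟩ ⟨0, by omega⟩ s t⟩⟩
      have hne : (∏ j : Fin k, ∏ t : ι, cell j t (r j t)) ≠ 0 := ne_of_gt hpos
      rw [Finset.prod_ne_zero_iff] at hne
      have h0 := hne ⟨0, by omega⟩ (Finset.mem_univ _)
      have h1 := hne ⟨1, by omega⟩ (Finset.mem_univ _)
      rw [Finset.prod_ne_zero_iff] at h0 h1
      apply Finset.prod_pos
      intro t _
      have hc0 : cell ⟨0, by omega⟩ t (r ⟨0, by omega⟩ t) ≠ 0 := h0 t (Finset.mem_univ t)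
      have hc1 : cell ⟨1, by omega⟩ t (r ⟨1, by omega⟩ t) ≠ 0 := h1 t (Finset.mem_univ t)
      simp only [cell] at hc0 hc1
      norm_num at hc0 hc1
      exact mul_pos (lt_of_le_of_ne (hnn1 _ _) (Ne.symm hc0))
        (lt_of_le_of_ne (hnn2 _ _) (Ne.symm hc1))
    · rintro ⟨a, b, hpos, hiff⟩
      by_cases hι : Nonempty ι
      · have hm : 0 < m := Fintype.card_pos
        have hfac : ∀ t : ι, 0 < p1 t (a t) ∧ 0 < p2 t (b t) := by
          intro t
          have hne := ne_of_gt hpos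
          rw [Finset.prod_ne_zero_iff] at hne
          have := hne t (Finset.mem_univ t)
          rw [mul_ne_zero_iff] at this
          exact ⟨lt_of_le_of_ne (hnn1 _ _) (Ne.symm this.1),
            lt_of_le_of_ne (hnn2 _ _) (Ne.symm this.2)⟩
        set g : ι → ι := fun t => Function.invFun a (a t) with hgdef
        have hga : ∀ t, a (g t) = a t := fun t => Function.invFun_eq ⟨t, rfl⟩
        have hg : ∀ s t : ι, g s = g t ↔ a s = a t := by
          intro s t
          constructor
          · intro h
            rw [← hga s, ← hga t, h]
          · intro h
            simp only [hgdef, h]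
        set r : Fin k → ι → (V ⊕ ι) := fun j t =>
          if j.val = 0 then a t else if j.val = 1 then b t else Sum.inr (g t) with hrdef
        have hkey : ∀ (j : Fin k) (s t : ι), r j s = r j t ↔ a s = a t := by
          intro j s t
          by_cases hj0 : j.val = 0
          · simp [hrdef, hj0]
          · by_cases hj1 : j.val = 1
            · simp [hrdef, hj0, hj1]
              exact (hiff s t).symm
            · simp [hrdef, hj0, hj1]
              exact hg s t
        refine ⟨r, ?_, fun j j' s t h => (hkey j' s t).mpr ((hkey j s t).mp h)⟩
        apply Finset.prod_pos
        intro j _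
        apply Finset.prod_pos
        intro t _
        by_cases hj0 : j.val = 0
        · simp only [hrdef, cell, hj0, if_pos rfl, if_true]
          exact (hfac t).1
        · by_cases hj1 : j.val = 1
          · simp only [hrdef, cell, hj0, hj1, if_neg hj0, if_pos rfl, if_true]
            exact (hfac t).2
          · have hcv : cell j t (r j t) = 1 / (m : ℝ) := by
              simp only [hrdef, cell, if_neg hj0, if_neg hj1, u]
            rw [hcv]
            exact div_pos one_pos (by exact_mod_cast hm)
      · rw [not_nonempty_iff] at hι
        refine ⟨fun _ t => isEmptyElim t, ?_, fun _ _ s => isEmptyElim s⟩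
        simp only [Pr, Finset.univ_eq_empty, Finset.prod_empty, Finset.prod_const_one]
        norm_num
  · intro r hr
    obtain ⟨n, rfl⟩ : ∃ n, k = n + 3 := ⟨k - 3, by omega⟩
    have hrest : ∀ i : Fin (n + 1),
        ∏ t : ι, cell i.succ.succ t (r i.succ.succ t) = ((m : ℝ))⁻¹ ^ m := by
      intro i
      have hval : (i.succ.succ : Fin (n + 3)).val = i.val + 2 := by
        simp [Fin.val_succ]
      have hc : ∀ t : ι, cell i.succ.succ t (r i.succ.succ t) = (m : ℝ)⁻¹ := by
        intro t
        obtain ⟨i', hi'⟩ := hr i.succ.succ (by omega) t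
        simp only [cell, hval, hi', u]
        rw [if_neg (show ¬(↑i + 2 = 1) by omega)]
        norm_num
      rw [Finset.prod_congr rfl (fun t _ => hc t), Finset.prod_const, Finset.card_univ]
    have h02 : (0 : Fin (n + 3)) = ⟨0, by omega⟩ := rfl
    have h12 : ((0 : Fin (n + 2)).succ : Fin (n + 3)) = ⟨1, by omega⟩ := rfl
    show (∏ j : Fin (n + 3), ∏ t : ι, cell j t (r j t)) = _
    rw [Fin.prod_univ_succ, Fin.prod_univ_succ]
    rw [Finset.prod_congr rfl (fun i _ => hrest i), Finset.prod_const, Finset.card_univ,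
      Fintype.card_fin, h02, h12]
    have e0 : ∀ t : ι, cell ⟨0, by omega⟩ t (r ⟨0, by omega⟩ t) = p1 t (r ⟨0, by omega⟩ t) := by
      intro t; simp [cell]
    have e1 : ∀ t : ι, cell ⟨1, by omega⟩ t (r ⟨1, by omega⟩ t) = p2 t (r ⟨1, by omega⟩ t) := by
      intro t; simp [cell]
    rw [Finset.prod_congr rfl (fun t _ => e0 t), Finset.prod_congr rfl (fun t _ => e1 t),
      Finset.prod_mul_distrib]
    exact stmt9_aux _ _ _ _ _
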